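/- The congruence subgroup Γ₁(3) of SL(2,ℤ) is generated by two elements α and β satisfying the single relation (αβ)³ = 1; equivalently, Γ₁(3) is isomorphic to the free product ℤ * (ℤ/3ℤ). -/

import Mathlib

open CongruenceSubgroup

namespace Stmt2
open Matrix MatrixGroups UpperHalfPlane Pointwise

/-! ### Basic elements -/

def Umat : SL(2, ℤ) := ⟨!![1, 1; -3, -2], by norm_num [Matrix.det_fin_two_of]⟩
def Vmat : SL(2, ℤ) := ⟨!![-2, -1; 3, 1], by norm_num [Matrix.det_fin_two_of]⟩

lemma U_cube : Umat ^ 3 = 1 := by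
  ext i j
  simp only [Umat, pow_succ, pow_zero, one_mul]
  fin_cases i <;> fin_cases j <;>
    rfl

lemma U_sq : Umat ^ 2 = Vmat := by
  ext i j
  simp only [Umat, Vmat, pow_succ, pow_zero, one_mul]
  fin_cases i <;> fin_cases j <;>
    rfl

lemma T_mem : ModularGroup.T ∈ Gamma1 3 := by
  rw [Gamma1_mem]; simp [ModularGroup.T]

lemma U_mem : Umat ∈ Gamma1 3 := by
  rw [Gamma1_mem]; simp only [Umat]; norm_num; decide

def αe : Gamma1 3 := ⟨ModularGroup.T, T_mem⟩
def ue : Gamma1 3 := ⟨Umat, U_mem⟩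

lemma ue_cube : ue ^ 3 = 1 := by
  apply Subtype.ext
  rw [SubmonoidClass.coe_pow]
  show Umat ^ 3 = ((1 : Gamma1 3) : SL(2, ℤ))
  rw [U_cube]; rfl

/-! ### Entry lemmas -/

lemma Umat_apply : Umat.1 0 0 = 1 ∧ Umat.1 0 1 = 1 ∧ Umat.1 1 0 = -3 ∧ Umat.1 1 1 = -2 := by
  refine ⟨?_, ?_, ?_, ?_⟩ <;> simp [Umat]

lemma Uinv_apply : (Umat⁻¹).1 0 0 = -2 ∧ (Umat⁻¹).1 0 1 = -1 ∧ (Umat⁻¹).1 1 0 = 3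
    ∧ (Umat⁻¹).1 1 1 = 1 := by
  rw [Matrix.SpecialLinearGroup.SL2_inv_expl]
  refine ⟨?_, ?_, ?_, ?_⟩ <;> simp [Umat]

lemma Tzpow_apply (n : ℤ) : (ModularGroup.T ^ n).1 0 0 = 1 ∧ (ModularGroup.T ^ n).1 0 1 = n
    ∧ (ModularGroup.T ^ n).1 1 0 = 0 ∧ (ModularGroup.T ^ n).1 1 1 = 1 := by
  have := ModularGroup.coe_T_zpow n
  refine ⟨?_, ?_, ?_, ?_⟩ <;> rw [this] <;> simp

lemma coe_entry_mul (x y : SL(2, ℤ)) (i j : Fin 2) :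
    (x * y).1 i j = x.1 i 0 * y.1 0 j + x.1 i 1 * y.1 1 j := by
  rw [Matrix.SpecialLinearGroup.coe_mul, Matrix.mul_apply, Fin.sum_univ_two]

lemma c_dvd (g : Gamma1 3) : (3:ℤ) ∣ (g : SL(2,ℤ)).1 1 0 := by
  have h := (Gamma1_mem 3 _).mp g.2
  exact_mod_cast (ZMod.intCast_zmod_eq_zero_iff_dvd _ 3).mp h.2.2

lemma a_mod (g : Gamma1 3) : (((g : SL(2,ℤ)).1 0 0 : ℤ) : ZMod 3) = 1 :=
  ((Gamma1_mem 3 _).mp g.2).1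

/-! ### The reduction lemma (Euclid-style descent step) -/

lemma reduce_pos (a c : ℤ) (hc : 0 < c) (h3 : (3:ℤ) ∣ c) (hcop : IsCoprime a c) :
    ∃ m : ℤ, ¬ (3 ∣ m) ∧ |3 * a + m * c| < |c| := by
  set q := (3 * a) / c with hq
  set r := (3 * a) % c with hr
  have hqr : c * q + r = 3 * a := Int.mul_ediv_add_emod (3*a) c
  have hr0 : 0 ≤ r := Int.emod_nonneg _ hc.ne'
  have hrc : r < c := Int.emod_lt_of_pos _ hc
  by_cases h3q : (3:ℤ) ∣ q
  · have hrne : r ≠ 0 := by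
      intro h0
      obtain ⟨k, hk⟩ := h3q
      rw [hk] at hqr
      have hck : c * (3 * k) = 3 * (c * k) := by ring
      have : c ∣ a := ⟨k, by linarith⟩
      have := hcop.isUnit_of_dvd' this dvd_rfl
      rw [Int.isUnit_iff] at this
      omega
    refine ⟨-q - 1, by omega, ?_⟩
    have h' : 3 * a + (-q - 1) * c = r - c := by linarith
    rw [h', abs_lt, abs_of_pos hc]
    omega
  · refine ⟨-q, fun h => h3q (dvd_neg.mp h), ?_⟩
    have h' : 3 * a + (-q) * c = r := by linarith
    rw [h', abs_lt, abs_of_pos hc]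
    omega

lemma reduce (a c : ℤ) (hc : c ≠ 0) (h3 : (3:ℤ) ∣ c) (hcop : IsCoprime a c) :
    ∃ m : ℤ, ¬ (3 ∣ m) ∧ |3 * a + m * c| < |c| := by
  rcases hc.lt_or_gt with h | h
  · obtain ⟨m, hm, habs⟩ := reduce_pos a (-c) (by omega) (by omega) (hcop.neg_right)
    refine ⟨-m, by omega, ?_⟩
    rw [abs_neg] at habs
    convert habs using 2; ring
  · exact reduce_pos a c h h3 hcop

/-! ### Generation -/

lemma coe_mul_Γ (x y : Gamma1 3) : ((x * y : Gamma1 3) : SL(2,ℤ)) = (x : SL(2,ℤ)) * (y : SL(2,ℤ)) := rfl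

lemma coe_zpow_Γ (x : Gamma1 3) (n : ℤ) : ((x ^ n : Gamma1 3) : SL(2,ℤ)) = (x : SL(2,ℤ)) ^ n :=
  SubgroupClass.coe_zpow x n

lemma Tpow_mul_entries (g : Gamma1 3) (n' : ℤ) :
    ((αe ^ n' * g : Gamma1 3) : SL(2,ℤ)).1 0 0
        = (g : SL(2,ℤ)).1 0 0 + n' * (g : SL(2,ℤ)).1 1 0 ∧
      ((αe ^ n' * g : Gamma1 3) : SL(2,ℤ)).1 1 0 = (g : SL(2,ℤ)).1 1 0 := by
  obtain ⟨h1, h2, h3, h4⟩ := Tzpow_apply n'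
  rw [coe_mul_Γ, coe_zpow_Γ]
  constructor
  · rw [coe_entry_mul]
    show (ModularGroup.T ^ n').1 0 0 * _ + (ModularGroup.T ^ n').1 0 1 * _ = _
    rw [h1, h2]; ring
  · rw [coe_entry_mul]
    show (ModularGroup.T ^ n').1 1 0 * _ + (ModularGroup.T ^ n').1 1 1 * _ = _
    rw [h3, h4]; ring

lemma mem_closure (g : Gamma1 3) : g ∈ Subgroup.closure ({αe, ue} : Set (Gamma1 3)) := by
  set K := Subgroup.closure ({αe, ue} : Set (Gamma1 3)) with hK
  have hαK : αe ∈ K := Subgroup.subset_closure (by simp)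
  have huK : ue ∈ K := Subgroup.subset_closure (by simp)
  generalize hn : ((g : SL(2,ℤ)).1 1 0).natAbs = n
  induction n using Nat.strong_induction_on generalizing g with
  | _ n IH =>
    subst hn
    by_cases hc0 : (g : SL(2,ℤ)).1 1 0 = 0
    · -- base case : g = αe ^ b
      have hdet : (g : SL(2,ℤ)).1.det = 1 := (g : SL(2,ℤ)).2
      rw [Matrix.det_fin_two] at hdet
      rw [hc0, mul_zero, sub_zero] at hdet
      rcases Int.eq_one_or_neg_one_of_mul_eq_one' hdet with ⟨ha, hd⟩ | ⟨ha, hd⟩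
      · set b := (g : SL(2,ℤ)).1 0 1 with hb
        have hcoe : ((g : SL(2,ℤ)) : Matrix (Fin 2) (Fin 2) ℤ) = !![1, b; 0, 1] := by
          ext i j
          fin_cases i <;> fin_cases j <;> simp [ha, hd, hc0, hb]
        have hgT : (g : SL(2,ℤ)) = ModularGroup.T ^ b := by
          apply Subtype.ext
          rw [hcoe, ModularGroup.coe_T_zpow]
        have : g = αe ^ b := by
          apply Subtype.ext
          rw [coe_zpow_Γ]
          exact hgT
        rw [this]
        exact zpow_mem hαK b
      · exfalso
        have := a_mod g
        rw [ha] at this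
        norm_num at this
        exact absurd this (by decide)
    · -- inductive step
      set a := (g : SL(2,ℤ)).1 0 0 with hadef
      set c := (g : SL(2,ℤ)).1 1 0 with hcdef
      have hdet : (g : SL(2,ℤ)).1.det = 1 := (g : SL(2,ℤ)).2
      rw [Matrix.det_fin_two] at hdet
      have hcop : IsCoprime a c :=
        ⟨(g : SL(2,ℤ)).1 1 1, -((g : SL(2,ℤ)).1 0 1), by linear_combination hdet⟩
      obtain ⟨m, hm3, habs⟩ := reduce a c hc0 (c_dvd g) hcop
      have hlt : (3 * a + m * c).natAbs < c.natAbs := by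
        rw [Int.abs_eq_natAbs, Int.abs_eq_natAbs] at habs
        exact_mod_cast habs
      set n' := m / 3 with hn'
      have hmn : 3 * n' + m % 3 = m := Int.mul_ediv_add_emod m 3
      have hr : m % 3 = 1 ∨ m % 3 = 2 := by omega
      obtain ⟨hA, hC⟩ := Tpow_mul_entries g n'
      rcases hr with hr | hr
      · -- use U⁻¹
        set g' := ue⁻¹ * (αe ^ n' * g) with hg'
        have hc' : (g' : SL(2,ℤ)).1 1 0 = 3 * a + m * c := by
          rw [hg', coe_mul_Γ, coe_entry_mul]
          have hic : ((ue⁻¹ : Gamma1 3) : SL(2,ℤ)) = Umat⁻¹ := rfl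
          rw [hic]
          obtain ⟨k1, k2, k3, k4⟩ := Uinv_apply
          rw [k3, k4, hA, hC]
          linear_combination c * hmn - c * hr
        have hg'K : g' ∈ K := by
          apply IH _ (hc' ▸ hlt) g' rfl
        have hgeq : g = (αe ^ n')⁻¹ * (ue * g') := by
          rw [hg']; group
        rw [hgeq]
        exact mul_mem (inv_mem (zpow_mem hαK n')) (mul_mem huK hg'K)
      · -- use U
        set g' := ue * (αe ^ n' * g) with hg'
        have hc' : (g' : SL(2,ℤ)).1 1 0 = -(3 * a + m * c) := by
          rw [hg', coe_mul_Γ, coe_entry_mul]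
          have hic : ((ue : Gamma1 3) : SL(2,ℤ)) = Umat := rfl
          rw [hic]
          obtain ⟨k1, k2, k3, k4⟩ := Umat_apply
          rw [k3, k4, hA, hC]
          linear_combination (-c) * hmn + c * hr
        have hg'K : g' ∈ K := by
          apply IH _ (by rw [hc', Int.natAbs_neg]; exact hlt) g' rfl
        have hgeq : g = (αe ^ n')⁻¹ * (ue⁻¹ * g') := by
          rw [hg']; group
        rw [hgeq]
        exact mul_mem (inv_mem (zpow_mem hαK n')) (mul_mem (inv_mem huK) hg'K)

lemma closure_top : Subgroup.closure ({αe, ue} : Set (Gamma1 3)) = ⊤ := by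
  rw [eq_top_iff]
  rintro g -
  exact mem_closure g

/-! ### Real part of the action -/

lemma smul_re (g : SL(2,ℤ)) (z : ℍ) :
    (g • z).re = (((g.1 0 0 : ℝ) * z.re + g.1 0 1) * ((g.1 1 0 : ℝ) * z.re + g.1 1 1)
        + ((g.1 0 0 : ℝ) * g.1 1 0) * z.im ^ 2) /
      (((g.1 1 0 : ℝ) * z.re + g.1 1 1) ^ 2 + (g.1 1 0 : ℝ) ^ 2 * z.im ^ 2) := by
  rw [UpperHalfPlane.specialLinearGroup_apply]
  show (((algebraMap ℤ ℝ (g.1 0 0) : ℂ) * z + (algebraMap ℤ ℝ (g.1 0 1) : ℂ)) /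
      ((algebraMap ℤ ℝ (g.1 1 0) : ℂ) * z + (algebraMap ℤ ℝ (g.1 1 1) : ℂ))).re = _
  rw [Complex.div_re, ← add_div]
  have : ∀ n : ℤ, algebraMap ℤ ℝ n = (n : ℝ) := fun n => by simp
  rw [this, this, this, this]
  rw [Complex.normSq_apply]
  congr 1 <;>
    simp only [Complex.add_re, Complex.add_im, Complex.mul_re, Complex.mul_im,
      Complex.ofReal_re, Complex.ofReal_im, UpperHalfPlane.coe_re, UpperHalfPlane.coe_im] <;>
    ring

lemma U_smul_mem (z : ℍ) (hz : z.re ≤ -1 ∨ 0 ≤ z.re) :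
    -1 < (Umat • z).re ∧ (Umat • z).re < 0 := by
  rw [smul_re]
  have e00 : Umat.1 0 0 = 1 := by simp [Umat]
  have e01 : Umat.1 0 1 = 1 := by simp [Umat]
  have e10 : Umat.1 1 0 = -3 := by simp [Umat]
  have e11 : Umat.1 1 1 = -2 := by simp [Umat]
  rw [e00, e01, e10, e11]
  set x := z.re
  set y := z.im
  have hy : 0 < y := z.im_pos
  have hden : 0 < ((-3:ℝ) * x + -2) ^ 2 + (-3:ℝ) ^ 2 * y ^ 2 := by positivity
  push_cast
  constructor
  · rw [lt_div_iff₀ hden]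
    rcases hz with h | h <;> nlinarith
  · rw [div_lt_iff₀ hden]
    rcases hz with h | h <;> nlinarith

lemma V_smul_mem (z : ℍ) (hz : z.re ≤ -1 ∨ 0 ≤ z.re) :
    -1 < (Vmat • z).re ∧ (Vmat • z).re < 0 := by
  rw [smul_re]
  have e00 : Vmat.1 0 0 = -2 := by simp [Vmat]
  have e01 : Vmat.1 0 1 = -1 := by simp [Vmat]
  have e10 : Vmat.1 1 0 = 3 := by simp [Vmat]
  have e11 : Vmat.1 1 1 = 1 := by simp [Vmat]
  rw [e00, e01, e10, e11]
  set x := z.re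
  set y := z.im
  have hy : 0 < y := z.im_pos
  have hden : 0 < ((3:ℝ) * x + 1) ^ 2 + (3:ℝ) ^ 2 * y ^ 2 := by
    rcases hz with h | h <;> nlinarith
  push_cast
  constructor
  · rw [lt_div_iff₀ hden]
    rcases hz with h | h <;> nlinarith
  · rw [div_lt_iff₀ hden]
    rcases hz with h | h <;> nlinarith

end Stmt2

namespace Stmt2
open Matrix MatrixGroups UpperHalfPlane Pointwise Monoid

/-! ### The homomorphisms from the factors -/

lemma ue_pow_mod (m : ℕ) : ue ^ m = ue ^ (m % 3) := by
  conv_lhs => rw [← Nat.div_add_mod m 3, pow_add, pow_mul, ue_cube, one_pow, one_mul]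

def φ3 : Multiplicative (ZMod 3) →* Gamma1 3 :=
  MonoidHom.mk' (fun x => ue ^ (x.toAdd.val)) (by
    intro x y
    show ue ^ ((x.toAdd + y.toAdd).val) = _
    rw [ZMod.val_add, ← ue_pow_mod, pow_add])

/-- The indexed family of groups (`true ↦ ℤ`, `false ↦ ℤ/3`). -/
def Hfam : Bool → Type
  | true => Multiplicative ℤ
  | false => Multiplicative (ZMod 3)

instance instGroupHfam : (b : Bool) → Group (Hfam b)
  | true => inferInstanceAs (Group (Multiplicative ℤ))
  | false => inferInstanceAs (Group (Multiplicative (ZMod 3)))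

def ffam : (b : Bool) → Hfam b →* Gamma1 3
  | true => zpowersHom _ αe
  | false => φ3

def Xfam : Bool → Set ℍ
  | true => {z : ℍ | z.re ≤ -1 ∨ 0 ≤ z.re}
  | false => {z : ℍ | -1 < z.re ∧ z.re < 0}

lemma hXnonempty : ∀ b, (Xfam b).Nonempty := by
  intro b
  cases b
  · exact ⟨UpperHalfPlane.mk ⟨-1/2, 1⟩ (by norm_num), by constructor <;> norm_num⟩
  · exact ⟨UpperHalfPlane.mk ⟨0, 1⟩ (by norm_num), Or.inr (by norm_num)⟩

lemma hXdisj : Pairwise (Function.onFun Disjoint Xfam) := by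
  intro i j hij
  have : ∀ (p : ℍ), p ∈ Xfam true → p ∈ Xfam false → False := by
    intro p h1 h2
    rcases h1 with h | h <;> rcases h2 with ⟨h3, h4⟩ <;> linarith
  cases i <;> cases j <;>
    first
      | exact absurd rfl hij
      | exact Set.disjoint_left.mpr (fun p hp hq => this p hq hp)
      | exact Set.disjoint_left.mpr (fun p hp hq => this p hp hq)

lemma hpp : Pairwise fun i j => ∀ h : Hfam i, h ≠ 1 → ffam i h • Xfam j ⊆ Xfam i := by
  intro i j hij
  cases i
  · -- i = false : powers of U send Xfam true into Xfam false
    cases j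
    · exact absurd rfl hij
    · show ∀ h : Multiplicative (ZMod 3), h ≠ 1 → φ3 h • Xfam true ⊆ Xfam false
      intro h h1 p hp
      obtain ⟨z, hz, rfl⟩ := hp
      have h0 : h.toAdd ≠ 0 := fun hh => h1 (by
        have : h = Multiplicative.ofAdd (0 : ZMod 3) := by
          rw [← hh]; rfl
        rw [this]; rfl)
      have h12 : h.toAdd = 1 ∨ h.toAdd = 2 :=
        (by decide : ∀ x : ZMod 3, x ≠ 0 → x = 1 ∨ x = 2) _ h0
      have hz' : z.re ≤ -1 ∨ 0 ≤ z.re := hz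
      show (φ3 h • z) ∈ Xfam false
      have hφ : φ3 h = ue ^ (h.toAdd.val) := rfl
      rcases h12 with h2 | h2
      · have he : φ3 h = ue := by
          rw [hφ, h2, show (1 : ZMod 3).val = 1 from rfl, pow_one]
        rw [he]
        have hc : ue • z = Umat • z := rfl
        rw [hc]
        exact U_smul_mem z hz'
      · have he : φ3 h = ue ^ 2 := by
          rw [hφ, h2, show (2 : ZMod 3).val = 2 from rfl]
        rw [he]
        have hc : (ue ^ 2) • z = (Umat ^ 2) • z := rfl
        rw [hc, U_sq]
        exact V_smul_mem z hz'
  · -- i = true : powers of T send Xfam false into Xfam true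
    cases j
    · show ∀ h : Multiplicative ℤ, h ≠ 1 → (zpowersHom _ αe) h • Xfam false ⊆ Xfam true
      intro h h1 p hp
      obtain ⟨z, hz, rfl⟩ := hp
      have h0 : h.toAdd ≠ 0 := fun hh => h1 (by
        have : h = Multiplicative.ofAdd (0 : ℤ) := by rw [← hh]; rfl
        rw [this]; rfl)
      have hf : zpowersHom (Gamma1 3) αe h = αe ^ h.toAdd := rfl
      show (zpowersHom (Gamma1 3) αe h • z) ∈ Xfam true
      rw [hf]
      have hc : (αe ^ h.toAdd) • z = (ModularGroup.T ^ h.toAdd) • z := by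
        rw [Subgroup.smul_def, coe_zpow_Γ]; rfl
      rw [hc, UpperHalfPlane.modular_T_zpow_smul]
      show ((h.toAdd : ℝ) +ᵥ z).re ≤ -1 ∨ 0 ≤ ((h.toAdd : ℝ) +ᵥ z).re
      rw [UpperHalfPlane.vadd_re]
      obtain ⟨hz1, hz2⟩ : -1 < z.re ∧ z.re < 0 := hz
      set n := h.toAdd
      rcases lt_or_gt_of_ne h0 with hn | hn
      · left
        have : (n : ℝ) ≤ -1 := by exact_mod_cast (by omega : n ≤ -1)
        linarith
      · right
        have : (1 : ℝ) ≤ (n : ℝ) := by exact_mod_cast hn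
        linarith
    · exact absurd rfl hij

lemma hcard : 3 ≤ Cardinal.mk Bool ∨ ∃ b, 3 ≤ Cardinal.mk (Hfam b) := by
  right
  refine ⟨true, ?_⟩
  have h1 : (Cardinal.aleph0 : Cardinal) ≤ Cardinal.mk (Multiplicative ℤ) :=
    Cardinal.aleph0_le_mk _
  have h2 : ((3 : ℕ) : Cardinal) < Cardinal.aleph0 := Cardinal.nat_lt_aleph0 3
  have : ((3 : ℕ) : Cardinal) ≤ Cardinal.mk (Multiplicative ℤ) := h2.le.trans h1
  exact_mod_cast this

/-! ### The isomorphism -/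

noncomputable def ψ : Monoid.CoprodI Hfam →* Gamma1 3 := Monoid.CoprodI.lift ffam

lemma ψ_inj : Function.Injective ψ :=
  Monoid.CoprodI.lift_injective_of_ping_pong ffam hcard Xfam hXnonempty hXdisj hpp

lemma ψ_surj : Function.Surjective ψ := by
  rw [← MonoidHom.range_eq_top]
  rw [eq_top_iff, ← closure_top]
  rw [Subgroup.closure_le]
  rintro x (rfl | rfl)
  · refine ⟨Monoid.CoprodI.of (i := true) (Multiplicative.ofAdd (1 : ℤ) : Multiplicative ℤ), ?_⟩
    show Monoid.CoprodI.lift ffam _ = _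
    erw [Monoid.CoprodI.lift_of]
    show αe ^ (1 : ℤ) = αe
    exact zpow_one αe
  · refine ⟨Monoid.CoprodI.of (i := false) (Multiplicative.ofAdd (1 : ZMod 3) : Multiplicative (ZMod 3)), ?_⟩
    show Monoid.CoprodI.lift ffam _ = _
    erw [Monoid.CoprodI.lift_of]
    show ue ^ ((1 : ZMod 3).val) = ue
    rw [show (1 : ZMod 3).val = 1 from rfl, pow_one]

noncomputable def e1 : Monoid.CoprodI Hfam ≃* Gamma1 3 :=
  MulEquiv.ofBijective ψ ⟨ψ_inj, ψ_surj⟩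

def gfam : (b : Bool) → Hfam b →* Coprod (Multiplicative ℤ) (Multiplicative (ZMod 3))
  | true => Coprod.inl
  | false => Coprod.inr

def toCoprod : Monoid.CoprodI Hfam →* Coprod (Multiplicative ℤ) (Multiplicative (ZMod 3)) :=
  Monoid.CoprodI.lift gfam

def inlH : Multiplicative ℤ →* Monoid.CoprodI Hfam :=
  Monoid.CoprodI.of (M := Hfam) (i := true)

def inrH : Multiplicative (ZMod 3) →* Monoid.CoprodI Hfam :=
  Monoid.CoprodI.of (M := Hfam) (i := false)

def ofCoprod : Coprod (Multiplicative ℤ) (Multiplicative (ZMod 3)) →* Monoid.CoprodI Hfam :=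
  Coprod.lift inlH inrH

lemma toCoprod_inlH (x : Multiplicative ℤ) : toCoprod (inlH x) = Coprod.inl x :=
  Monoid.CoprodI.lift_of gfam (i := true) x

lemma toCoprod_inrH (x : Multiplicative (ZMod 3)) : toCoprod (inrH x) = Coprod.inr x :=
  Monoid.CoprodI.lift_of gfam (i := false) x

lemma ofCoprod_inl (x : Multiplicative ℤ) : ofCoprod (Coprod.inl x) = inlH x :=
  Coprod.lift_apply_inl inlH inrH x

lemma ofCoprod_inr (x : Multiplicative (ZMod 3)) : ofCoprod (Coprod.inr x) = inrH x :=
  Coprod.lift_apply_inr inlH inrH x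

def e2 : Monoid.CoprodI Hfam ≃* Coprod (Multiplicative ℤ) (Multiplicative (ZMod 3)) :=
  MonoidHom.toMulEquiv toCoprod ofCoprod
    (by
      apply Monoid.CoprodI.ext_hom
      intro b
      cases b
      · apply MonoidHom.ext
        intro x
        show ofCoprod (toCoprod (inrH x)) = inrH x
        erw [toCoprod_inrH, ofCoprod_inr]
      · apply MonoidHom.ext
        intro x
        show ofCoprod (toCoprod (inlH x)) = inlH x
        erw [toCoprod_inlH, ofCoprod_inl])
    (by
      apply Coprod.hom_ext
      · apply MonoidHom.ext
        intro x
        show toCoprod (ofCoprod (Coprod.inl x)) = Coprod.inl x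
        rw [ofCoprod_inl, toCoprod_inlH]
      · apply MonoidHom.ext
        intro x
        show toCoprod (ofCoprod (Coprod.inr x)) = Coprod.inr x
        rw [ofCoprod_inr, toCoprod_inrH])

end Stmt2

open CongruenceSubgroup

/-- The congruence subgroup `Γ₁(3) ⊆ SL(2,ℤ)` is generated by two
elements `α, β` satisfying the single relation `(αβ)³ = 1`; equivalently, `Γ₁(3)` is
isomorphic to the free product `ℤ * (ℤ/3ℤ)`. -/
theorem stmt_2 :
    (∃ α β : Gamma1 3, Subgroup.closure ({α, β} : Set (Gamma1 3)) = ⊤ ∧ (α * β) ^ 3 = 1) ∧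
      Nonempty ((Gamma1 3) ≃* Monoid.Coprod (Multiplicative ℤ) (Multiplicative (ZMod 3))) := by
  constructor
  · refine ⟨Stmt2.αe, Stmt2.αe⁻¹ * Stmt2.ue, ?_, ?_⟩
    · rw [eq_top_iff, ← Stmt2.closure_top, Subgroup.closure_le]
      rintro x (rfl | rfl)
      · exact Subgroup.subset_closure (by simp)
      · have h : Stmt2.ue = Stmt2.αe * (Stmt2.αe⁻¹ * Stmt2.ue) := by group
        rw [h]
        exact mul_mem (Subgroup.subset_closure (by simp)) (Subgroup.subset_closure (by simp))
    · have h : Stmt2.αe * (Stmt2.αe⁻¹ * Stmt2.ue) = Stmt2.ue := by group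
      rw [h, Stmt2.ue_cube]
  · exact ⟨Stmt2.e1.symm.trans Stmt2.e2⟩
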